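/- arXiv:1804.04305 — 2 statements merged into one kernel-verified Lean document; each statement's English description precedes it below -/
import Mathlib

section
/- Let |ξ⟩ = ∑_{m≥0} |m⟩/(q;q)_m and ⟨ξ| = ∑_{m≥0} ⟨m|/(q;q)_m be boundary vectors in the q-boson Fock space with inner product ⟨m|m'⟩ = (q²;q²)_m δ_{m,m'}. Then for |q| < 1, |z| < |q|^{-m}, and j, m ≥ 0: ⟨ξ| z^h (a⁺)^j k^m |ξ⟩ = q^{m/2} (-q;q)_j z^j (-q^{j+m+1}z;q)_∞ / (q^m z;q)_∞, and ⟨ξ| z^h (a⁻)^j k^m |ξ⟩ = q^{m/2} (-q;q)_j q^{mj} (-q^{j+m+1}z;q)_∞ / (q^m z;q)_∞. -/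
/-- The operator on the Fock space `(ℕ →₀ ℂ)` sending `|m⟩` to `c m • |g m⟩`. -/
noncomputable def fockOp (c : ℕ → ℂ) (g : ℕ → ℕ) : Module.End ℂ (ℕ →₀ ℂ) :=
  Finsupp.lsum ℂ fun m => c m • Finsupp.lsingle (g m)

/-- `(a; p)_n = ∏_{k=1}^n (1 - a p^{k-1})`. -/
noncomputable def qPoch (a p : ℂ) (n : ℕ) : ℂ := ∏ k ∈ Finset.range n, (1 - a * p ^ k)

/-- `(a; p)_∞ = ∏_{k ≥ 1} (1 - a p^{k-1})`. -/
noncomputable def qPochInf (a p : ℂ) : ℂ := ∏' k : ℕ, (1 - a * p ^ k)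

/-! ### Elementary properties of `qPoch` -/

lemma qPoch_succ (a p : ℂ) (n : ℕ) : qPoch a p (n+1) = qPoch a p n * (1 - a*p^n) :=
  Finset.prod_range_succ _ n

lemma qPoch_add (a p : ℂ) (i n : ℕ) : qPoch a p (i+n) = qPoch a p i * qPoch (a*p^i) p n := by
  unfold qPoch
  rw [Finset.prod_range_add]
  congr 1
  exact Finset.prod_congr rfl fun k _ => by rw [pow_add]; ring

lemma qPoch_sq' (u q : ℂ) (n : ℕ) : qPoch (u^2) (q^2) n = qPoch u q n * qPoch (-u) q n := by
  unfold qPoch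
  rw [← Finset.prod_mul_distrib]
  exact Finset.prod_congr rfl fun k _ => by ring

lemma poch_factor_ne {u q : ℂ} (hq : ‖q‖ < 1) (hu : ‖u‖ < 1) (k : ℕ) :
    1 - u * q ^ k ≠ 0 := by
  intro h
  rw [sub_eq_zero] at h
  have : ‖u * q^k‖ < 1 := by
    rw [norm_mul, norm_pow]
    calc ‖u‖ * ‖q‖^k ≤ ‖u‖ * 1 :=
      mul_le_mul_of_nonneg_left (pow_le_one₀ (norm_nonneg q) hq.le) (norm_nonneg u)
    _ = ‖u‖ := mul_one _
    _ < 1 := hu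
  rw [← h] at this
  simp at this

lemma qPoch_ne_zero {u q : ℂ} (hq : ‖q‖ < 1) (hu : ‖u‖ < 1) (n : ℕ) : qPoch u q n ≠ 0 := by
  unfold qPoch
  rw [Finset.prod_ne_zero_iff]
  exact fun k _ => poch_factor_ne hq hu k

lemma qPoch_q_ne_zero {q : ℂ} (hq : ‖q‖ < 1) (n : ℕ) : qPoch q q n ≠ 0 :=
  qPoch_ne_zero hq hq n

/-! ### Norm bounds for `qPoch` -/

lemma geo_partial {r : ℝ} (h0 : 0 ≤ r) (h1 : r < 1) (n : ℕ) :
    ∑ k ∈ Finset.range n, r ^ k ≤ (1 - r)⁻¹ := by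
  have := Summable.sum_le_tsum (Finset.range n) (fun k _ => pow_nonneg h0 k)
    (summable_geometric_of_lt_one h0 h1)
  rwa [tsum_geometric_of_lt_one h0 h1] at this

lemma one_sub_ge_exp {x c : ℝ} (hx : 0 ≤ x) (hxc : x ≤ c) (hc : c < 1) :
    Real.exp (-(x/(1-c))) ≤ 1 - x := by
  have h1 : (0:ℝ) < 1 - c := by linarith
  have hy : 0 ≤ x / (1-c) := div_nonneg hx h1.le
  have h2 := Real.add_one_le_exp (x/(1-c))
  have h3 : (0:ℝ) < Real.exp (x/(1-c)) := Real.exp_pos _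
  rw [Real.exp_neg]
  rw [inv_le_comm₀ h3 (by linarith)]
  calc (1-x)⁻¹ ≤ (1 + x/(1-c))⁻¹⁻¹ := by
        rw [inv_inv]
        rw [inv_le_iff_one_le_mul₀ (by linarith)]
        have : 0 ≤ x * (c - x) := by nlinarith
        rw [div_eq_mul_inv]
        have hx4 : x * (1-c)⁻¹ * (1-c) = x := by field_simp
        have hnn : 0 ≤ x * (1-c)⁻¹ * (c - x) :=
          mul_nonneg (mul_nonneg hx (inv_pos.mpr h1).le) (by linarith)
        nlinarith [hx4, hnn]
  _ ≤ Real.exp (x/(1-c)) := by rw [inv_inv]; linarith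

lemma norm_qPoch_le (a q : ℂ) (hq : ‖q‖ < 1) (n : ℕ) :
    ‖qPoch a q n‖ ≤ Real.exp (‖a‖ * (1-‖q‖)⁻¹) := by
  unfold qPoch
  calc ‖∏ k ∈ Finset.range n, (1 - a * q ^ k)‖
      = ∏ k ∈ Finset.range n, ‖1 - a * q ^ k‖ := norm_prod _ _
  _ ≤ ∏ k ∈ Finset.range n, Real.exp (‖a‖ * ‖q‖ ^ k) := by
      apply Finset.prod_le_prod (fun k _ => norm_nonneg _)
      intro k _
      calc ‖1 - a * q ^ k‖ ≤ ‖(1:ℂ)‖ + ‖a * q^k‖ := norm_sub_le _ _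
      _ = 1 + ‖a‖ * ‖q‖^k := by rw [norm_one, norm_mul, norm_pow]
      _ ≤ Real.exp (‖a‖ * ‖q‖^k) := by
          have := Real.add_one_le_exp (‖a‖ * ‖q‖^k); linarith
  _ = Real.exp (∑ k ∈ Finset.range n, ‖a‖ * ‖q‖ ^ k) := by rw [Real.exp_sum]
  _ ≤ Real.exp (‖a‖ * (1-‖q‖)⁻¹) := by
      apply Real.exp_le_exp.mpr
      rw [← Finset.mul_sum]
      have := geo_partial (norm_nonneg q) hq n
      nlinarith [norm_nonneg a]

lemma norm_qPoch_q_ge (q : ℂ) (hq : ‖q‖ < 1) (n : ℕ) :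
    Real.exp (-(‖q‖ * (1-‖q‖)⁻¹ * (1-‖q‖)⁻¹)) ≤ ‖qPoch q q n‖ := by
  unfold qPoch
  rw [norm_prod]
  calc Real.exp (-(‖q‖ * (1-‖q‖)⁻¹ * (1-‖q‖)⁻¹))
      ≤ Real.exp (-(∑ k ∈ Finset.range n, ‖q‖^(k+1) / (1-‖q‖))) := by
        apply Real.exp_le_exp.mpr
        rw [neg_le_neg_iff]
        have h1 : (0:ℝ) < 1 - ‖q‖ := by linarith
        rw [← Finset.sum_div, div_le_iff₀ h1]
        have h2 : ∑ k ∈ Finset.range n, ‖q‖^(k+1) = ‖q‖ * ∑ k ∈ Finset.range n, ‖q‖^k := by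
          rw [Finset.mul_sum]; exact Finset.sum_congr rfl fun k _ => by ring
        have h3 := geo_partial (norm_nonneg q) hq n
        have h4 : (1-‖q‖)⁻¹ * (1-‖q‖) = 1 := inv_mul_cancel₀ h1.ne'
        rw [h2]
        nlinarith [norm_nonneg q, inv_pos.mpr h1]
  _ = ∏ k ∈ Finset.range n, Real.exp (-(‖q‖^(k+1) / (1-‖q‖))) := by
        rw [← Real.exp_sum, ← Finset.sum_neg_distrib]
  _ ≤ ∏ k ∈ Finset.range n, ‖1 - q * q ^ k‖ := by
      apply Finset.prod_le_prod (fun k _ => (Real.exp_pos _).le)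
      intro k _
      calc Real.exp (-(‖q‖^(k+1) / (1-‖q‖)))
          ≤ 1 - ‖q‖^(k+1) := by
            apply one_sub_ge_exp (pow_nonneg (norm_nonneg q) _) _ hq
            calc ‖q‖^(k+1) ≤ ‖q‖^1 := by
                  apply pow_le_pow_of_le_one (norm_nonneg q) hq.le
                  omega
            _ = ‖q‖ := pow_one _
      _ ≤ ‖1 - q * q^k‖ := by
            have := norm_sub_norm_le (1:ℂ) (q * q^k)
            rw [norm_one, norm_mul, norm_pow] at this
            calc 1 - ‖q‖^(k+1) = 1 - ‖q‖*‖q‖^k := by ring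
            _ ≤ _ := this

/-! ### The series `∑ (a;q)_n/(q;q)_n wⁿ` -/

noncomputable def qK (a q : ℂ) : ℝ :=
  Real.exp (‖a‖ * (1-‖q‖)⁻¹ + ‖q‖ * (1-‖q‖)⁻¹ * (1-‖q‖)⁻¹)

lemma qK_nonneg (a q : ℂ) : 0 ≤ qK a q := (Real.exp_pos _).le

lemma norm_coef_le (a q : ℂ) (hq : ‖q‖ < 1) (n : ℕ) :
    ‖qPoch a q n / qPoch q q n‖ ≤ qK a q := by
  rw [norm_div]
  have h1 := norm_qPoch_le a q hq n
  have h2 := norm_qPoch_q_ge q hq n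
  have h3 : (0:ℝ) < Real.exp (-(‖q‖ * (1-‖q‖)⁻¹ * (1-‖q‖)⁻¹)) := Real.exp_pos _
  calc ‖qPoch a q n‖ / ‖qPoch q q n‖
      ≤ Real.exp (‖a‖ * (1-‖q‖)⁻¹) / Real.exp (-(‖q‖ * (1-‖q‖)⁻¹ * (1-‖q‖)⁻¹)) :=
        div_le_div₀ (Real.exp_pos _).le h1 h3 h2
  _ = qK a q := by rw [← Real.exp_sub, qK]; ring_nf

lemma summable_main (a q w : ℂ) (hq : ‖q‖ < 1) (hw : ‖w‖ < 1) :
    Summable (fun n : ℕ => qPoch a q n / qPoch q q n * w ^ n) := by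
  apply Summable.of_norm_bounded (g := fun n => qK a q * ‖w‖^n)
    ((summable_geometric_of_lt_one (norm_nonneg w) hw).mul_left _)
  intro n
  rw [norm_mul, norm_pow]
  exact mul_le_mul_of_nonneg_right (norm_coef_le a q hq n) (pow_nonneg (norm_nonneg w) n)

noncomputable def qS (a q w : ℂ) : ℂ := ∑' n : ℕ, qPoch a q n / qPoch q q n * w ^ n

lemma qS_sub_one (a q w : ℂ) (hq : ‖q‖ < 1) (hw : ‖w‖ < 1) :
    ‖qS a q w - 1‖ ≤ qK a q * ‖w‖ * (1-‖w‖)⁻¹ := by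
  have hs := summable_main a q w hq hw
  have h0 : qS a q w = 1 + ∑' n : ℕ, qPoch a q (n+1) / qPoch q q (n+1) * w ^ (n+1) := by
    rw [qS, hs.tsum_eq_zero_add]
    congr 1
    simp [qPoch]
  rw [h0]
  have hb : ∀ n : ℕ, ‖qPoch a q (n+1) / qPoch q q (n+1) * w ^ (n+1)‖ ≤
      (qK a q * ‖w‖) * ‖w‖^n := by
    intro n
    rw [norm_mul, norm_pow]
    calc ‖qPoch a q (n+1) / qPoch q q (n+1)‖ * ‖w‖^(n+1)
        ≤ qK a q * ‖w‖^(n+1) :=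
          mul_le_mul_of_nonneg_right (norm_coef_le a q hq _) (pow_nonneg (norm_nonneg w) _)
    _ = (qK a q * ‖w‖) * ‖w‖^n := by ring
  have hg : HasSum (fun n : ℕ => (qK a q * ‖w‖) * ‖w‖^n)
      ((qK a q * ‖w‖) * (1-‖w‖)⁻¹) :=
    (hasSum_geometric_of_lt_one (norm_nonneg w) hw).mul_left _
  have := tsum_of_norm_bounded hg hb
  calc ‖1 + (∑' n : ℕ, qPoch a q (n+1) / qPoch q q (n+1) * w ^ (n+1)) - 1‖
      = ‖∑' n : ℕ, qPoch a q (n+1) / qPoch q q (n+1) * w ^ (n+1)‖ := by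
        rw [add_sub_cancel_left]
  _ ≤ (qK a q * ‖w‖) * (1-‖w‖)⁻¹ := this
  _ = qK a q * ‖w‖ * (1-‖w‖)⁻¹ := by ring

/-! ### Functional equation and iteration -/

lemma funct_eq (a q w : ℂ) (hq : ‖q‖ < 1) (hw : ‖w‖ < 1) :
    (1 - w) * qS a q w = (1 - a*w) * qS a q (q*w) := by
  have hqw : ‖q*w‖ < 1 := by
    rw [norm_mul]
    calc ‖q‖ * ‖w‖ ≤ 1 * ‖w‖ := mul_le_mul_of_nonneg_right hq.le (norm_nonneg w)
    _ = ‖w‖ := one_mul _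
    _ < 1 := hw
  set c : ℕ → ℂ := fun n => qPoch a q n / qPoch q q n with hc
  have sA : Summable (fun n : ℕ => c n * w^n) := summable_main a q w hq hw
  have sC : Summable (fun n : ℕ => c n * (q*w)^n) := summable_main a q (q*w) hq hqw
  have sB : Summable (fun n : ℕ => c n * w^n * w) := sA.mul_right w
  have sD : Summable (fun n : ℕ => c n * (q*w)^n * (a*w)) := sC.mul_right (a*w)
  set v : ℕ → ℂ := fun n => c n * w^n - c n * (q*w)^n with hv
  set u : ℕ → ℂ := fun n => c n * w^n * w - c n * (q*w)^n * (a*w) with hu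
  have sv : Summable v := sA.sub sC
  have su : Summable u := sB.sub sD
  have hv0 : v 0 = 0 := by simp [hv]
  have hvu : ∀ n : ℕ, v (n+1) = u n := by
    intro n
    have h1 : qPoch a q (n+1) = qPoch a q n * (1 - a*q^n) := qPoch_succ a q n
    have h2 : qPoch q q (n+1) = qPoch q q n * (1 - q*q^n) := qPoch_succ q q n
    have hne : qPoch q q n ≠ 0 := qPoch_q_ne_zero hq n
    have hne1 : qPoch q q (n+1) ≠ 0 := qPoch_q_ne_zero hq (n+1)
    have hne2 : (1 - q*q^n) ≠ 0 := by
      intro h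
      apply hne1
      rw [h2, h, mul_zero]
    simp only [hv, hu, hc]
    rw [h1, h2]
    have hi : (1 - q*q^n) * (1 - q*q^n)⁻¹ = 1 := mul_inv_cancel₀ hne2
    simp only [div_eq_mul_inv, mul_inv]
    linear_combination (qPoch a q n * (qPoch q q n)⁻¹ * w^(n+1) * (1 - a*q^n)) * hi
  have key : ∑' n, v n = ∑' n, u n := by
    rw [sv.tsum_eq_zero_add, hv0, zero_add]
    exact tsum_congr hvu
  have e1 : ∑' n, v n = (∑' n : ℕ, c n * w^n) - ∑' n : ℕ, c n * (q*w)^n := sA.tsum_sub sC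
  have e2 : ∑' n, u n = (∑' n : ℕ, c n * w^n * w) - ∑' n : ℕ, c n * (q*w)^n * (a*w) :=
    sB.tsum_sub sD
  have e3 : ∑' n : ℕ, c n * w^n * w = (∑' n : ℕ, c n * w^n) * w := tsum_mul_right
  have e4 : ∑' n : ℕ, c n * (q*w)^n * (a*w) = (∑' n : ℕ, c n * (q*w)^n) * (a*w) := tsum_mul_right
  have hSw : qS a q w = ∑' n : ℕ, c n * w^n := rfl
  have hSqw : qS a q (q*w) = ∑' n : ℕ, c n * (q*w)^n := rfl
  rw [e1, e2, e3, e4] at key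
  rw [hSw, hSqw]
  linear_combination key

lemma iterate_eq (a q w : ℂ) (hq : ‖q‖ < 1) (hw : ‖w‖ < 1) (N : ℕ) :
    qPoch w q N * qS a q w = qPoch (a*w) q N * qS a q (q^N * w) := by
  induction N with
  | zero => simp [qPoch]
  | succ N ih =>
      have hwN : ‖q^N * w‖ < 1 := by
        rw [norm_mul, norm_pow]
        calc ‖q‖^N * ‖w‖ ≤ 1 * ‖w‖ :=
          mul_le_mul_of_nonneg_right (pow_le_one₀ (norm_nonneg q) hq.le) (norm_nonneg w)
        _ = ‖w‖ := one_mul _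
        _ < 1 := hw
      have hfe := funct_eq a q (q^N * w) hq hwN
      rw [qPoch_succ, qPoch_succ]
      have h1 : 1 - w * q^N = 1 - q^N * w := by ring
      have h2 : 1 - a * (q^N * w) = 1 - a*w*q^N := by ring
      have h3 : q * (q^N * w) = q^(N+1) * w := by ring
      rw [h2, h3] at hfe
      calc qPoch w q N * (1 - w*q^N) * qS a q w
          = (1 - w*q^N) * (qPoch w q N * qS a q w) := by ring
      _ = (1 - w*q^N) * (qPoch (a*w) q N * qS a q (q^N * w)) := by rw [ih]
      _ = qPoch (a*w) q N * ((1 - q^N*w) * qS a q (q^N*w)) := by rw [← h1]; ring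
      _ = qPoch (a*w) q N * ((1 - a*w*q^N) * qS a q (q^(N+1) * w)) := by rw [hfe]
      _ = qPoch (a*w) q N * (1 - a*w*q^N) * qS a q (q^(N+1) * w) := by ring

/-! ### Infinite products -/

lemma summable_log_poch (u q : ℂ) (hq : ‖q‖ < 1) (hu : ‖u‖ < 1) :
    Summable (fun k : ℕ => Complex.log (1 - u * q ^ k)) := by
  apply Summable.of_norm_bounded_eventually_nat (g := fun k => 3/2 * (‖u‖ * ‖q‖^k))
    (((summable_geometric_of_lt_one (norm_nonneg q) hq).mul_left _).mul_left _)
  have hten : Filter.Tendsto (fun k : ℕ => ‖u‖ * ‖q‖^k) Filter.atTop (nhds 0) := by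
    rw [show (0:ℝ) = ‖u‖ * 0 by ring]
    exact (tendsto_pow_atTop_nhds_zero_of_lt_one (norm_nonneg q) hq).const_mul _
  have hev : ∀ᶠ k : ℕ in Filter.atTop, ‖u‖ * ‖q‖^k ≤ 1/2 := by
    filter_upwards [hten.eventually_le_const (by norm_num : (0:ℝ) < 1/2)] with k hk
    exact hk
  filter_upwards [hev] with k hk
  have h1 : ‖-(u * q^k)‖ ≤ 1/2 := by
    rw [norm_neg, norm_mul, norm_pow]; exact hk
  have := Complex.norm_log_one_add_half_le_self h1
  rw [show (1:ℂ) + -(u*q^k) = 1 - u*q^k by ring] at this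
  rw [norm_neg, norm_mul, norm_pow] at this
  exact this

lemma multipliable_poch (u q : ℂ) (hq : ‖q‖ < 1) (hu : ‖u‖ < 1) :
    Multipliable (fun k : ℕ => 1 - u * q ^ k) :=
  Complex.multipliable_of_summable_log (summable_log_poch u q hq hu)

lemma qPochInf_ne_zero (u q : ℂ) (hq : ‖q‖ < 1) (hu : ‖u‖ < 1) :
    qPochInf u q ≠ 0 := by
  have := Complex.cexp_tsum_eq_tprod (f := fun k => 1 - u * q^k)
    (fun k => poch_factor_ne hq hu k)
    (summable_log_poch u q hq hu)
  rw [qPochInf, ← this]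
  exact Complex.exp_ne_zero _

/-! ### The q-binomial theorem -/

theorem qbinom (a q w : ℂ) (hq : ‖q‖ < 1) (hw : ‖w‖ < 1) (haw : ‖a*w‖ < 1) :
    ∑' n : ℕ, qPoch a q n / qPoch q q n * w ^ n = qPochInf (a*w) q / qPochInf w q := by
  have m1 := multipliable_poch w q hq hw
  have m2 := multipliable_poch (a*w) q hq haw
  have t1 : Filter.Tendsto (fun N => qPoch w q N) Filter.atTop (nhds (qPochInf w q)) :=
    m1.hasProd.tendsto_prod_nat
  have t2 : Filter.Tendsto (fun N => qPoch (a*w) q N) Filter.atTop (nhds (qPochInf (a*w) q)) :=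
    m2.hasProd.tendsto_prod_nat
  have tS : Filter.Tendsto (fun N => qS a q (q^N * w)) Filter.atTop (nhds 1) := by
    have hnorm : ∀ N : ℕ, ‖qS a q (q^N * w) - 1‖ ≤ qK a q * ‖w‖ * (1-‖w‖)⁻¹ * ‖q‖^N := by
      intro N
      have hwN : ‖q^N * w‖ ≤ ‖q‖^N * ‖w‖ := by rw [norm_mul, norm_pow]
      have hwN2 : ‖q^N * w‖ ≤ ‖w‖ := by
        calc ‖q^N * w‖ ≤ ‖q‖^N * ‖w‖ := hwN
        _ ≤ 1 * ‖w‖ := mul_le_mul_of_nonneg_right (pow_le_one₀ (norm_nonneg q) hq.le)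
              (norm_nonneg w)
        _ = ‖w‖ := one_mul _
      have hwN3 : ‖q^N * w‖ < 1 := lt_of_le_of_lt hwN2 hw
      have h1 := qS_sub_one a q (q^N * w) hq hwN3
      have h2 : (1 - ‖q^N * w‖)⁻¹ ≤ (1 - ‖w‖)⁻¹ := by
        apply inv_anti₀ (by linarith)
        linarith
      calc ‖qS a q (q^N * w) - 1‖ ≤ qK a q * ‖q^N * w‖ * (1-‖q^N * w‖)⁻¹ := h1
      _ ≤ qK a q * (‖q‖^N * ‖w‖) * (1-‖w‖)⁻¹ := by
          apply mul_le_mul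
          · exact mul_le_mul_of_nonneg_left hwN (qK_nonneg a q)
          · exact h2
          · exact inv_nonneg.mpr (by linarith)
          · exact mul_nonneg (qK_nonneg a q) (by positivity)
      _ = qK a q * ‖w‖ * (1-‖w‖)⁻¹ * ‖q‖^N := by ring
    have hb : Filter.Tendsto (fun N : ℕ => qK a q * ‖w‖ * (1-‖w‖)⁻¹ * ‖q‖^N)
        Filter.atTop (nhds 0) := by
      rw [show (0:ℝ) = qK a q * ‖w‖ * (1-‖w‖)⁻¹ * 0 by ring]
      exact (tendsto_pow_atTop_nhds_zero_of_lt_one (norm_nonneg q) hq).const_mul _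
    have ht : Filter.Tendsto (fun N => qS a q (q^N * w) - 1) Filter.atTop (nhds 0) := by
      rw [tendsto_zero_iff_norm_tendsto_zero]
      exact squeeze_zero (fun N => norm_nonneg _) hnorm hb
    have := ht.add_const 1
    simpa using this
  have tL : Filter.Tendsto (fun N => qPoch w q N * qS a q w) Filter.atTop
      (nhds (qPochInf w q * qS a q w)) := t1.mul_const _
  have tR : Filter.Tendsto (fun N => qPoch (a*w) q N * qS a q (q^N * w)) Filter.atTop
      (nhds (qPochInf (a*w) q * 1)) := t2.mul tS
  have heq : (fun N => qPoch w q N * qS a q w) =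
      (fun N => qPoch (a*w) q N * qS a q (q^N * w)) :=
    funext fun N => iterate_eq a q w hq hw N
  rw [heq] at tL
  have huniq := tendsto_nhds_unique tL tR
  have hne := qPochInf_ne_zero w q hq hw
  show qS a q w = _
  rw [eq_div_iff hne, mul_comm (qS a q w)]
  rw [huniq, mul_one]

/-! ### Fock space operator computations -/

lemma fockOp_single (c : ℕ → ℂ) (g : ℕ → ℕ) (b : ℕ) (x : ℂ) :
    fockOp c g (Finsupp.single b x) = Finsupp.single (g b) (c b * x) := by
  simp [fockOp, Finsupp.smul_single, smul_eq_mul]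

lemma aP_pow (j b : ℕ) (x : ℂ) :
    ((fockOp (fun _ => (1:ℂ)) (· + 1)) ^ j) (Finsupp.single b x) = Finsupp.single (b+j) x := by
  induction j generalizing b with
  | zero => simp
  | succ j ih =>
      rw [pow_succ', Module.End.mul_apply, ih, fockOp_single, one_mul]
      norm_num [add_assoc]

lemma diag_pow (c : ℕ → ℂ) (mm b : ℕ) (x : ℂ) :
    ((fockOp c id) ^ mm) (Finsupp.single b x) = Finsupp.single b (c b ^ mm * x) := by
  induction mm with
  | zero => simp
  | succ mm ih =>
      rw [pow_succ', Module.End.mul_apply, ih, fockOp_single, id_eq]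
      congr 1
      ring

lemma aM_pow_apply (q : ℂ) (j n : ℕ) (x : ℂ) :
    ((fockOp (fun a => 1 - q ^ (2*a)) (· - 1)) ^ j) (Finsupp.single (n+j) x) =
      Finsupp.single n (qPoch (q^2 * (q^2)^n) (q^2) j * x) := by
  induction j generalizing x with
  | zero => simp [qPoch]
  | succ j ih =>
      rw [pow_succ, Module.End.mul_apply, fockOp_single]
      have h1 : n + (j+1) - 1 = n + j := by omega
      rw [h1, ih]
      congr 1
      rw [qPoch_succ]
      have h2 : q ^ (2 * (n + (j+1))) = q^2 * (q^2)^n * (q^2)^j := by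
        rw [← pow_mul, ← pow_mul, ← pow_add, ← pow_add]
        congr 1
        ring
      rw [h2]
      ring

lemma aM_pow_zero (q : ℂ) (b : ℕ) (x : ℂ) :
    ((fockOp (fun a => 1 - q ^ (2*a)) (· - 1)) ^ (b+1)) (Finsupp.single b x) = 0 := by
  induction b generalizing x with
  | zero =>
      rw [pow_one, fockOp_single]
      simp
  | succ b ih =>
      rw [pow_succ, Module.End.mul_apply, fockOp_single]
      have h1 : b + 1 - 1 = b := by omega
      rw [h1, ih]

lemma aM_pow_zero' (q : ℂ) (j b : ℕ) (hb : b < j) (x : ℂ) :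
    ((fockOp (fun a => 1 - q ^ (2*a)) (· - 1)) ^ j) (Finsupp.single b x) = 0 := by
  obtain ⟨t, rfl⟩ : ∃ t, j = t + (b+1) := ⟨j - (b+1), by omega⟩
  rw [pow_add, Module.End.mul_apply, aM_pow_zero, map_zero]

/-! ### The two main computations -/

lemma norm_w (q z : ℂ) (m : ℕ) (hz : ‖z‖ * ‖q‖^m < 1) : ‖q^m * z‖ < 1 := by
  rw [norm_mul, norm_pow, mul_comm]; exact hz

lemma norm_aw (q z : ℂ) (j m : ℕ) (hq : ‖q‖ < 1) (hz : ‖z‖ * ‖q‖^m < 1) :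
    ‖(-(q^(j+1))) * (q^m*z)‖ < 1 := by
  rw [neg_mul, norm_neg, norm_mul, norm_pow]
  have h1 : ‖q‖^(j+1) ≤ 1 := pow_le_one₀ (norm_nonneg q) hq.le
  have h2 := norm_w q z m hz
  nlinarith [norm_nonneg (q^m*z)]

lemma partA (q sq z : ℂ) (j m : ℕ) (hq : ‖q‖ < 1) (hz : ‖z‖ * ‖q‖^m < 1) :
    ∑' b : ℕ, (qPoch q q b)⁻¹ *
      (((fockOp (fun a => z^a) id * fockOp (fun _ => (1:ℂ)) (· + 1) ^ j *
          fockOp (fun a => sq*q^a) id ^ m) (Finsupp.single b 1)).sum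
        fun a c => qPoch (q^2) (q^2) a / qPoch q q a * c) =
    sq^m * qPoch (-q) q j * z^j * qPochInf (-(q^(j+m+1))*z) q / qPochInf (q^m*z) q := by
  have hw := norm_w q z m hz
  have haw := norm_aw q z j m hq hz
  have hcalc : ∀ b : ℕ, (qPoch q q b)⁻¹ *
      (((fockOp (fun a => z^a) id * fockOp (fun _ => (1:ℂ)) (· + 1) ^ j *
          fockOp (fun a => sq*q^a) id ^ m) (Finsupp.single b 1)).sum
        fun a c => qPoch (q^2) (q^2) a / qPoch q q a * c) =
      (sq^m * qPoch (-q) q j * z^j) *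
        (qPoch (-(q^(j+1))) q b / qPoch q q b * (q^m*z)^b) := by
    intro b
    rw [Module.End.mul_apply, Module.End.mul_apply, diag_pow, aP_pow, fockOp_single, id_eq]
    rw [Finsupp.sum_single_index (by simp)]
    have hsq2 : qPoch (q^2) (q^2) (b+j) = qPoch q q (b+j) * qPoch (-q) q (b+j) :=
      qPoch_sq' q q (b+j)
    have h2 : qPoch (-q) q (b+j) = qPoch (-q) q j * qPoch (-(q^(j+1))) q b := by
      rw [add_comm b j, qPoch_add (-q) q j b, show -q*q^j = -(q^(j+1)) from by ring]
    have h3 : qPoch q q (b+j) ≠ 0 := qPoch_ne_zero hq hq (b+j)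
    have h4 : qPoch q q b ≠ 0 := qPoch_ne_zero hq hq b
    rw [hsq2, h2]
    field_simp
    ring
  rw [tsum_congr hcalc, tsum_mul_left, qbinom _ _ _ hq hw haw,
    show (-(q^(j+1))) * (q^m*z) = -(q^(j+m+1))*z from by ring, ← mul_div_assoc]

lemma partB (q sq z : ℂ) (j m : ℕ) (hq : ‖q‖ < 1) (hz : ‖z‖ * ‖q‖^m < 1) :
    ∑' b : ℕ, (qPoch q q b)⁻¹ *
      (((fockOp (fun a => z^a) id * fockOp (fun a => 1 - q^(2*a)) (· - 1) ^ j *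
          fockOp (fun a => sq*q^a) id ^ m) (Finsupp.single b 1)).sum
        fun a c => qPoch (q^2) (q^2) a / qPoch q q a * c) =
    sq^m * qPoch (-q) q j * q^(m*j) * qPochInf (-(q^(j+m+1))*z) q / qPochInf (q^m*z) q := by
  have hw := norm_w q z m hz
  have haw := norm_aw q z j m hq hz
  set F : ℕ → ℂ := fun b => (qPoch q q b)⁻¹ *
      (((fockOp (fun a => z^a) id * fockOp (fun a => 1 - q^(2*a)) (· - 1) ^ j *
          fockOp (fun a => sq*q^a) id ^ m) (Finsupp.single b 1)).sum
        fun a c => qPoch (q^2) (q^2) a / qPoch q q a * c) with hF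
  have hF0 : ∀ b < j, F b = 0 := by
    intro b hb
    rw [hF]
    simp only [Module.End.mul_apply, diag_pow, id_eq, aM_pow_zero' q j b hb, map_zero,
      Finsupp.sum_zero_index, mul_zero]
  have hFs : ∀ n : ℕ, F (n+j) =
      (sq^m * qPoch (-q) q j * q^(m*j)) *
        (qPoch (-(q^(j+1))) q n / qPoch q q n * (q^m*z)^n) := by
    intro n
    rw [hF]
    simp only [Module.End.mul_apply, diag_pow, id_eq, aM_pow_apply, fockOp_single]
    rw [Finsupp.sum_single_index (by simp)]
    have hA : qPoch (q^2) (q^2) n = qPoch q q n * qPoch (-q) q n := qPoch_sq' q q n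
    have hB : qPoch (q^2 * (q^2)^n) (q^2) j =
        qPoch (q*q^n) q j * qPoch (-(q*q^n)) q j := by
      rw [show q^2 * (q^2)^n = (q*q^n)^2 from by ring, qPoch_sq']
    have hP : qPoch q q (n+j) = qPoch q q n * qPoch (q*q^n) q j := qPoch_add q q n j
    have hRS : qPoch (-q) q j * qPoch (-(q^(j+1))) q n =
        qPoch (-q) q n * qPoch (-(q*q^n)) q j := by
      have e1 : qPoch (-q) q (j+n) = qPoch (-q) q j * qPoch (-(q^(j+1))) q n := by
        rw [qPoch_add (-q) q j n, show -q*q^j = -(q^(j+1)) from by ring]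
      have e2 : qPoch (-q) q (n+j) = qPoch (-q) q n * qPoch (-(q*q^n)) q j := by
        rw [qPoch_add (-q) q n j, show -q*q^n = -(q*q^n) from by ring]
      rw [← e1, ← e2, add_comm]
    have h3 : qPoch q q (n+j) ≠ 0 := qPoch_ne_zero hq hq (n+j)
    have h4 : qPoch q q n ≠ 0 := qPoch_ne_zero hq hq n
    have h5 : qPoch (q*q^n) q j ≠ 0 := by
      apply qPoch_ne_zero hq
      rw [norm_mul, norm_pow]
      have h6 : ‖q‖^n ≤ 1 := pow_le_one₀ (norm_nonneg q) hq.le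
      nlinarith [norm_nonneg q]
    rw [hA, hB, hP]
    field_simp
    linear_combination
      (-(z ^ n * sq ^ m * q ^ (n * m) * q ^ (j * m))) * hRS
  have hsum : Summable F := by
    rw [← summable_nat_add_iff j]
    apply Summable.congr (((summable_main (-(q^(j+1))) q (q^m*z) hq hw).mul_left
      (sq^m * qPoch (-q) q j * q^(m*j))))
    intro n
    exact (hFs n).symm
  have hsplit := (hsum.sum_add_tsum_nat_add j).symm
  rw [hsplit]
  have hz0 : ∑ b ∈ Finset.range j, F b = 0 :=
    Finset.sum_eq_zero fun b hb => hF0 b (Finset.mem_range.mp hb)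
  rw [hz0, zero_add, tsum_congr hFs, tsum_mul_left, qbinom _ _ _ hq hw haw,
    show (-(q^(j+1))) * (q^m*z) = -(q^(j+m+1))*z from by ring, ← mul_div_assoc]

/-- for the boundary vectors `|ξ⟩ = ∑_m |m⟩/(q;q)_m`,
`⟨ξ| = ∑_m ⟨m|/(q;q)_m` (with `⟨m|m'⟩ = (q²;q²)_m δ_{m,m'}`), `|q| < 1`,
`|z| < |q|^{-m}` and `j, m ≥ 0`:
`⟨ξ| z^h (a⁺)^j k^m |ξ⟩ = q^{m/2} (-q;q)_j z^j (-q^{j+m+1}z;q)_∞ / (q^m z;q)_∞` and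
`⟨ξ| z^h (a⁻)^j k^m |ξ⟩ = q^{m/2} (-q;q)_j q^{mj} (-q^{j+m+1}z;q)_∞ / (q^m z;q)_∞`. -/
theorem stmt_9 (q sq z : ℂ) (hsq : sq ^ 2 = q) (hq : ‖q‖ < 1) (j m : ℕ)
    (hz : ‖z‖ * ‖q‖ ^ m < 1) :
    let aP := fockOp (fun _ => 1) (· + 1)
    let aM := fockOp (fun a => 1 - q ^ (2 * a)) (· - 1)
    let k := fockOp (fun a => sq * q ^ a) id
    let zh := fockOp (fun a => z ^ a) id
    let Brk : Module.End ℂ (ℕ →₀ ℂ) → ℂ := fun X =>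
      ∑' b : ℕ, (qPoch q q b)⁻¹ *
        ((X (Finsupp.single b 1)).sum fun a c => qPoch (q ^ 2) (q ^ 2) a / qPoch q q a * c)
    Brk (zh * aP ^ j * k ^ m) =
      sq ^ m * qPoch (-q) q j * z ^ j *
        qPochInf (-(q ^ (j + m + 1)) * z) q / qPochInf (q ^ m * z) q ∧
    Brk (zh * aM ^ j * k ^ m) =
      sq ^ m * qPoch (-q) q j * q ^ (m * j) *
        qPochInf (-(q ^ (j + m + 1)) * z) q / qPochInf (q ^ m * z) q := by
  intro aP aM k zh Brk
  exact ⟨partA q sq z j m hq hz, partB q sq z j m hq hz⟩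
end

section
/- The six-vertex R matrix R(z) ∈ End(C² ⊗ C²) defined by R(z)(v_i ⊗ v_i) = v_i ⊗ v_i for i ∈ {0,1}, R(z)(v₀⊗v₁) = (q^{3/2}(1-z)/(1+q³z)) v₀⊗v₁ + ((1+q³)z/(1+q³z)) v₁⊗v₀, R(z)(v₁⊗v₀) = ((1+q³)/(1+q³z)) v₀⊗v₁ - (q^{3/2}(1-z)/(1+q³z)) v₁⊗v₀, satisfies the Yang-Baxter equation R₁₂(x) R₁₃(xy) R₂₃(y) = R₂₃(y) R₁₃(xy) R₁₂(x). -/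
/-- Place a two-site operator `M` on tensor factors `a, b` of a triple tensor
product, acting as the identity on the remaining factor. -/
def emb2 {B : Type*} [DecidableEq B] (a b : Fin 3) (M : Matrix (B × B) (B × B) ℂ) :
    Matrix (Fin 3 → B) (Fin 3 → B) ℂ :=
  Matrix.of fun c d => M (c a, c b) (d a, d b) *
    ∏ i : Fin 3, if i = a ∨ i = b then 1 else if c i = d i then 1 else 0

/-- Denominator-free version of the six-vertex `R` matrix. -/
def Rpoly (q sq z : ℂ) : Matrix (Fin 2 × Fin 2) (Fin 2 × Fin 2) ℂ :=
  Matrix.of fun o i =>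
    if i = o ∧ i.1 = i.2 then 1 + q ^ 3 * z
    else if i = ((0 : Fin 2), (1 : Fin 2)) then
      (if o = i then sq ^ 3 * (1 - z)
       else if o = ((1 : Fin 2), (0 : Fin 2)) then (1 + q ^ 3) * z
       else 0)
    else if i = ((1 : Fin 2), (0 : Fin 2)) then
      (if o = ((0 : Fin 2), (1 : Fin 2)) then 1 + q ^ 3
       else if o = i then -(sq ^ 3 * (1 - z))
       else 0)
    else 0

lemma emb2_01 (M : Matrix (Fin 2 × Fin 2) (Fin 2 × Fin 2) ℂ) (c d : Fin 3 → Fin 2) :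
    emb2 0 1 M c d = if c 2 = d 2 then M (c 0, c 1) (d 0, d 1) else 0 := by
  simp [emb2, Fin.prod_univ_three]

lemma emb2_02 (M : Matrix (Fin 2 × Fin 2) (Fin 2 × Fin 2) ℂ) (c d : Fin 3 → Fin 2) :
    emb2 0 2 M c d = if c 1 = d 1 then M (c 0, c 2) (d 0, d 2) else 0 := by
  simp [emb2, Fin.prod_univ_three]

lemma emb2_12 (M : Matrix (Fin 2 × Fin 2) (Fin 2 × Fin 2) ℂ) (c d : Fin 3 → Fin 2) :
    emb2 1 2 M c d = if c 0 = d 0 then M (c 1, c 2) (d 1, d 2) else 0 := by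
  simp [emb2, Fin.prod_univ_three]

lemma sum_pi (f : (Fin 3 → Fin 2) → ℂ) :
    ∑ g, f g = f ![0,0,0] + f ![0,0,1] + f ![0,1,0] + f ![0,1,1]
      + f ![1,0,0] + f ![1,0,1] + f ![1,1,0] + f ![1,1,1] := by
  have h : (Finset.univ : Finset (Fin 3 → Fin 2))
      = {![0,0,0], ![0,0,1], ![0,1,0], ![0,1,1], ![1,0,0], ![1,0,1], ![1,1,0], ![1,1,1]} := by
    decide
  rw [h]
  rw [Finset.sum_insert (by decide), Finset.sum_insert (by decide), Finset.sum_insert (by decide),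
    Finset.sum_insert (by decide), Finset.sum_insert (by decide), Finset.sum_insert (by decide),
    Finset.sum_insert (by decide), Finset.sum_singleton]
  ring

lemma emb2_smul (a b : Fin 3) (t : ℂ) (M : Matrix (Fin 2 × Fin 2) (Fin 2 × Fin 2) ℂ) :
    emb2 a b (t • M) = t • emb2 a b M := by
  ext c d
  simp [emb2, mul_assoc]

set_option maxHeartbeats 8000000 in
lemma yb_poly (sq x y : ℂ) :
    emb2 0 1 (Rpoly (sq ^ 2) sq x) * emb2 0 2 (Rpoly (sq ^ 2) sq (x * y))
        * emb2 1 2 (Rpoly (sq ^ 2) sq y)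
      = emb2 1 2 (Rpoly (sq ^ 2) sq y) * emb2 0 2 (Rpoly (sq ^ 2) sq (x * y))
        * emb2 0 1 (Rpoly (sq ^ 2) sq x) := by
  ext c d
  fin_cases c <;> fin_cases d <;>
    · simp (config := { decide := true }) only [Matrix.mul_apply, sum_pi, emb2_01, emb2_02,
        emb2_12, Matrix.cons_val_zero, Matrix.cons_val_one, Matrix.head_cons, Matrix.cons_val_two,
        Matrix.tail_cons, Rpoly, Matrix.of_apply, Prod.mk.injEq, Fin.isValue,
        ite_true, ite_false, and_true, true_and, and_false, false_and, and_self,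
        mul_zero, zero_mul, add_zero, zero_add, mul_one, one_mul]
      try ring

/-- the six-vertex `R` matrix (the `n = 1` boundary-vector
reduced `R^{bv}(z)`), given by `R(z)(vᵢ⊗vᵢ) = vᵢ⊗vᵢ`,
`R(z)(v₀⊗v₁) = (q^{3/2}(1-z)/(1+q³z)) v₀⊗v₁ + ((1+q³)z/(1+q³z)) v₁⊗v₀`,
`R(z)(v₁⊗v₀) = ((1+q³)/(1+q³z)) v₀⊗v₁ - (q^{3/2}(1-z)/(1+q³z)) v₁⊗v₀`
(with `sq` a fixed square root of `q`, so `q^{3/2} = sq³`), satisfies the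
Yang-Baxter equation `R₁₂(x) R₁₃(xy) R₂₃(y) = R₂₃(y) R₁₃(xy) R₁₂(x)`. -/
theorem stmt_11 (q sq x y : ℂ) (hsq : sq ^ 2 = q)
    (h1 : 1 + q ^ 3 * x ≠ 0) (h2 : 1 + q ^ 3 * (x * y) ≠ 0) (h3 : 1 + q ^ 3 * y ≠ 0) :
    let R : ℂ → Matrix (Fin 2 × Fin 2) (Fin 2 × Fin 2) ℂ := fun z =>
      Matrix.of fun o i =>
        if i = o ∧ i.1 = i.2 then 1
        else if i = ((0 : Fin 2), (1 : Fin 2)) then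
          (if o = i then sq ^ 3 * (1 - z) / (1 + q ^ 3 * z)
           else if o = ((1 : Fin 2), (0 : Fin 2)) then (1 + q ^ 3) * z / (1 + q ^ 3 * z)
           else 0)
        else if i = ((1 : Fin 2), (0 : Fin 2)) then
          (if o = ((0 : Fin 2), (1 : Fin 2)) then (1 + q ^ 3) / (1 + q ^ 3 * z)
           else if o = i then -(sq ^ 3 * (1 - z) / (1 + q ^ 3 * z))
           else 0)
        else 0
    emb2 0 1 (R x) * emb2 0 2 (R (x * y)) * emb2 1 2 (R y) =
      emb2 1 2 (R y) * emb2 0 2 (R (x * y)) * emb2 0 1 (R x) := by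
  intro R
  subst hsq
  have key : ∀ z : ℂ, 1 + (sq ^ 2) ^ 3 * z ≠ 0 →
      (1 + (sq ^ 2) ^ 3 * z) • R z = Rpoly (sq ^ 2) sq z := by
    intro z hz
    ext o i
    simp only [R, Rpoly, Matrix.smul_apply, Matrix.of_apply, smul_eq_mul]
    have hz' : 1 + sq ^ 6 * z ≠ 0 := by ring_nf at hz ⊢; exact hz
    split_ifs <;> field_simp <;> ring
  have h' := yb_poly sq x y
  rw [← key x h1, ← key (x * y) h2, ← key y h3, emb2_smul, emb2_smul, emb2_smul] at h'
  simp only [smul_mul_assoc, mul_smul_comm, smul_smul] at h'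
  have hc : (1 + (sq ^ 2) ^ 3 * x) * ((1 + (sq ^ 2) ^ 3 * (x * y)) * (1 + (sq ^ 2) ^ 3 * y)) ≠ 0 :=
    mul_ne_zero h1 (mul_ne_zero h2 h3)
  rw [show (1 + (sq ^ 2) ^ 3 * y) * ((1 + (sq ^ 2) ^ 3 * (x * y)) * (1 + (sq ^ 2) ^ 3 * x))
      = (1 + (sq ^ 2) ^ 3 * x) * ((1 + (sq ^ 2) ^ 3 * (x * y)) * (1 + (sq ^ 2) ^ 3 * y)) from by
    ring] at h'
  exact smul_right_injective _ hc h'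
end
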